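/- arXiv:cs/0703036 — 5 statements merged into one kernel-verified Lean document; each statement's English description precedes it below -/
import Mathlib

section
/- Let ρ : G → Uₙ(ℂ) be a unitary representation of a finite group G, H ≤ G a subgroup, and W ⊆ ℂⁿ a subspace whose stabilizer in G is H. Then for g₀, g ∈ G with g ∈ H g₀ H ∪ H g₀⁻¹ H, the pair of subspaces (W, ρ(g)W) has the same set of principal angles as (W, ρ(g₀)W). In particular, the number of distinct sets of principal angles occurring between pairs of distinct elements of the orbit {ρ(g)W : g ∈ G} is at most the number of orbits of G acting on unordered pairs of distinct elements of G/H. -/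
open scoped Matrix

/-- Orthogonal projection onto a subspace, as an endomorphism. -/
noncomputable def proj {n : ℕ} (W : Submodule ℂ (EuclideanSpace ℂ (Fin n))) :
    EuclideanSpace ℂ (Fin n) →ₗ[ℂ] EuclideanSpace ℂ (Fin n) :=
  W.subtype ∘ₗ (W.orthogonalProjection).toLinearMap

/-- Squared chordal distance between two subspaces:
`Trace(Π_P) - Trace(Π_P Π_Q)`. -/
noncomputable def dc2 {n : ℕ} (P Q : Submodule ℂ (EuclideanSpace ℂ (Fin n))) : ℝ :=
  (LinearMap.trace ℂ _ (proj P) - LinearMap.trace ℂ _ (proj P ∘ₗ proj Q)).re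

/-- The action of a group element on `ℂⁿ` through a unitary representation. -/
noncomputable def act {n : ℕ} {G : Type*} [Group G]
    (ρ : G →* Matrix.unitaryGroup (Fin n) ℂ) (g : G) :
    EuclideanSpace ℂ (Fin n) →ₗ[ℂ] EuclideanSpace ℂ (Fin n) :=
  Matrix.toEuclideanLin (ρ g : Matrix (Fin n) (Fin n) ℂ)

/-- Irreducibility of a unitary matrix representation. -/
def IsIrred {n : ℕ} {G : Type*} [Group G] (ρ : G →* Matrix.unitaryGroup (Fin n) ℂ) : Prop :=
  ∀ U : Submodule ℂ (EuclideanSpace ℂ (Fin n)), (∀ g : G, U.map (act ρ g) ≤ U) → U = ⊥ ∨ U = ⊤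

/-- The character of a unitary matrix representation. -/
noncomputable def charOf {n : ℕ} {G : Type*} [Group G]
    (ρ : G →* Matrix.unitaryGroup (Fin n) ℂ) (g : G) : ℂ :=
  (ρ g : Matrix (Fin n) (Fin n) ℂ).trace

/-- `χ` is the character of some irreducible unitary representation of `G`. -/
def IsIrredChar {G : Type*} [Group G] (χ : G → ℂ) : Prop :=
  ∃ (d : ℕ) (σ : G →* Matrix.unitaryGroup (Fin d) ℂ), IsIrred σ ∧ ∀ g, χ g = charOf σ g

/-- Two pairs of subspaces have the same set of principal angles iff they are in the same
orbit of the unitary group. -/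
def samePA {n : ℕ} (P Q P' Q' : Submodule ℂ (EuclideanSpace ℂ (Fin n))) : Prop :=
  ∃ U : EuclideanSpace ℂ (Fin n) ≃ₗᵢ[ℂ] EuclideanSpace ℂ (Fin n),
    P.map U.toLinearEquiv.toLinearMap = P' ∧ Q.map U.toLinearEquiv.toLinearMap = Q'

/-- The isotypic subspace of a unitary representation `ρ` of `H` associated to a character
`χ` : the sum of all `H`-invariant subspaces on which the representation has character `χ`. -/
noncomputable def isotypic {n : ℕ} {H : Type*} [Group H]
    (ρ : H →* Matrix.unitaryGroup (Fin n) ℂ) (χ : H → ℂ) :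
    Submodule ℂ (EuclideanSpace ℂ (Fin n)) :=
  sSup {U : Submodule ℂ (EuclideanSpace ℂ (Fin n)) |
    ∃ hU : ∀ (h : H), ∀ x ∈ U, act ρ h x ∈ U,
      ∀ h : H, LinearMap.trace ℂ U ((act ρ h).restrict (hU h)) = χ h}

/-- Squared chordal distance in terms of projection matrices. -/
noncomputable def dc2M {ι : Type*} [Fintype ι] (P Q : Matrix ι ι ℂ) : ℝ :=
  (P.trace - (P * Q).trace).re

section Helpers
open Module
open scoped ComplexInnerProductSpace

-- Lemma A: extend pair of orthonormal families to a global isometry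
lemma exists_isometryEquiv_of_orthonormal {E : Type*} [NormedAddCommGroup E]
    [InnerProductSpace ℂ E] [FiniteDimensional ℂ E] {ι : Type*} [Fintype ι] {v w : ι → E}
    (hv : Orthonormal ℂ v) (hw : Orthonormal ℂ w) :
    ∃ U : E ≃ₗᵢ[ℂ] E, ∀ i, U (v i) = w i := by
  classical
  set N := finrank ℂ E with hN
  have hcard : Fintype.card ι ≤ N := by
    simpa using hv.linearIndependent.fintype_card_le_finrank
  let e : ι ↪ Fin N := (Fintype.equivFin ι).toEmbedding.trans (Fin.castLEEmb hcard)
  have key : ∀ (u : ι → E), Orthonormal ℂ u →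
      ∃ b : OrthonormalBasis (Fin N) ℂ E, ∀ i, b (e i) = u i := by
    intro u hu
    let u' : Fin N → E := fun j => if h : ∃ i, e i = j then u h.choose else 0
    have hu'e : ∀ i, u' (e i) = u i := by
      intro i
      have h : ∃ i', e i' = e i := ⟨i, rfl⟩
      have : h.choose = i := e.injective h.choose_spec
      simp [u', dif_pos h, this]
    have horth : Orthonormal ℂ ((Set.range e).restrict u') := by
      have : (Set.range e).restrict u' = u ∘ fun j => (Equiv.ofInjective e e.injective).symm j := by
        funext j
        simp only [Set.restrict_apply, Function.comp_apply]
        have : e ((Equiv.ofInjective e e.injective).symm j) = (j : Fin N) := by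
          exact congrArg Subtype.val ((Equiv.ofInjective e e.injective).apply_symm_apply j)
        show u' (j : Fin N) = _
        rw [← this, hu'e]
      rw [this]
      exact hu.comp _ (Equiv.injective _)
    obtain ⟨b, hb⟩ := horth.exists_orthonormalBasis_extension_of_card_eq (by simp [hN])
    exact ⟨b, fun i => by rw [hb (e i) (Set.mem_range_self i), hu'e]⟩
  obtain ⟨bv, hbv⟩ := key v hv
  obtain ⟨bw, hbw⟩ := key w hw
  refine ⟨bv.repr.trans bw.repr.symm, fun i => ?_⟩
  have : bv.repr (v i) = EuclideanSpace.single (e i) 1 := by rw [← hbv]; exact bv.repr_self _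
  simp [LinearIsometryEquiv.trans_apply, this, ← hbw]

-- Lemma B
lemma exists_isometry_swap_core {E : Type*} [NormedAddCommGroup E]
    [InnerProductSpace ℂ E] [FiniteDimensional ℂ E] {m : ℕ} {p q : Fin m → E} {c : Fin m → ℝ}
    (hp : Orthonormal ℂ p) (hq : Orthonormal ℂ q)
    (hc0 : ∀ i, 0 ≤ c i) (hc1 : ∀ i, c i ≤ 1)
    (hpq : ∀ i j, ⟪p i, q j⟫ = if i = j then (c i : ℂ) else 0) :
    ∃ U : E ≃ₗᵢ[ℂ] E, (∀ i, U (p i) = q i) ∧ (∀ i, U (q i) = p i) := by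
  classical
  have hp' := orthonormal_iff_ite.1 hp
  have hq' := orthonormal_iff_ite.1 hq
  have hqp : ∀ i j, ⟪q i, p j⟫ = if i = j then (c i : ℂ) else 0 := by
    intro i j
    rw [← inner_conj_symm, hpq j i]
    by_cases h : i = j
    · subst h; simp [Complex.conj_ofReal]
    · simp [h, Ne.symm h]
  set s : Fin m → ℝ := fun i => Real.sqrt (1 - c i ^ 2) with hs
  have hs2 : ∀ i, s i ^ 2 = 1 - c i ^ 2 := by
    intro i
    refine Real.sq_sqrt ?_
    nlinarith [hc0 i, hc1 i]
  have hs2' : ∀ i, (s i : ℂ) ^ 2 = 1 - (c i : ℂ) ^ 2 := by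
    intro i; exact_mod_cast congrArg Complex.ofReal (hs2 i)
  have hspos : ∀ i, c i ≠ 1 → 0 < s i := by
    intro i hi
    refine Real.sqrt_pos.2 ?_
    nlinarith [lt_of_le_of_ne (hc1 i) hi, hc0 i]
  set A : Fin m → E := fun i => q i - (c i : ℂ) • p i with hA
  have hAdef : ∀ i, A i = q i - (c i : ℂ) • p i := fun _ => rfl
  have hpA : ∀ i j, ⟪p i, A j⟫ = 0 := by
    intro i j
    rw [hAdef, inner_sub_right, inner_smul_right, hpq, hp']
    by_cases h : i = j
    · subst h; simp
    · simp [h]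
  have hAp : ∀ i j, ⟪A i, p j⟫ = 0 := by
    intro i j; rw [← inner_conj_symm, hpA]; simp
  have hqA : ∀ i j, ⟪q i, A j⟫ = if i = j then ((1 : ℂ) - (c i:ℂ)^2) else 0 := by
    intro i j
    rw [hAdef, inner_sub_right, inner_smul_right, hq', hqp]
    by_cases h : i = j
    · subst h; simp; ring
    · simp [h]
  have hAA : ∀ i j, ⟪A i, A j⟫ = if i = j then ((1 : ℂ) - (c i:ℂ)^2) else 0 := by
    intro i j
    rw [hAdef i, inner_sub_left, inner_smul_left, hpA, hqA]
    ring
  -- index type and the two orthonormal families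
  set f : Fin m → E := fun i => ((s i : ℂ))⁻¹ • A i with hf
  have hfdef : ∀ i, f i = ((s i : ℂ))⁻¹ • A i := fun _ => rfl
  set v : (Fin m) ⊕ {i : Fin m // c i ≠ 1} → E :=
    Sum.elim p (fun i => f i.1) with hv
  set w : (Fin m) ⊕ {i : Fin m // c i ≠ 1} → E :=
    Sum.elim q (fun i => (s i.1 : ℂ) • p i.1 - (c i.1 : ℂ) • f i.1) with hw
  have hsne : ∀ (i : {i : Fin m // c i ≠ 1}), (s i.1 : ℂ) ≠ 0 := by
    intro i; simpa using (hspos i.1 i.2).ne'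
  have hpf : ∀ i (j : {i : Fin m // c i ≠ 1}), ⟪p i, f j.1⟫ = 0 := by
    intro i j; rw [hfdef, inner_smul_right, hpA]; ring
  have hfp : ∀ (i : {i : Fin m // c i ≠ 1}) j, ⟪f i.1, p j⟫ = 0 := by
    intro i j; rw [hfdef, inner_smul_left, hAp]; ring
  have hqf : ∀ i (j : {i : Fin m // c i ≠ 1}),
      ⟪q i, f j.1⟫ = if i = j.1 then (s j.1 : ℂ) else 0 := by
    intro i j
    rw [hfdef, inner_smul_right, hqA]
    by_cases h : i = j.1
    · rw [if_pos h, if_pos h, h, ← hs2' j.1, sq, inv_mul_cancel_left₀ (hsne j)]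
    · rw [if_neg h, if_neg h]; ring
  have hfq : ∀ (i : {i : Fin m // c i ≠ 1}) j,
      ⟪f i.1, q j⟫ = if i.1 = j then (s i.1 : ℂ) else 0 := by
    intro i j
    rw [← inner_conj_symm, hqf j i]
    by_cases h : i.1 = j
    · rw [if_pos h.symm, if_pos h]; simp [Complex.conj_ofReal]
    · rw [if_neg (Ne.symm h), if_neg h]; simp
  have hff : ∀ (i j : {i : Fin m // c i ≠ 1}),
      ⟪f i.1, f j.1⟫ = if i.1 = j.1 then 1 else 0 := by
    intro i j
    rw [hfdef, hfdef, inner_smul_left, inner_smul_right, hAA]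
    by_cases h : i.1 = j.1
    · rw [if_pos h, if_pos h, h, ← hs2' j.1, map_inv₀, Complex.conj_ofReal, sq,
        inv_mul_cancel_left₀ (hsne j), inv_mul_cancel₀ (hsne j)]
    · rw [if_neg h, if_neg h]; ring
  have hvon : Orthonormal ℂ v := by
    rw [orthonormal_iff_ite]
    rintro (i | i) (j | j)
    · simpa [hv] using hp' i j
    · simpa [hv] using hpf i j
    · simpa [hv] using hfp i j
    · have := hff i j
      by_cases h : i = j
      · subst h; simpa [hv] using this
      · have h2 : i.1 ≠ j.1 := fun hh => h (Subtype.ext hh)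
        simpa [hv, h, h2] using this
  have hwon : Orthonormal ℂ w := by
    rw [orthonormal_iff_ite]
    rintro (i | i) (j | j)
    · simpa [hw] using hq' i j
    · have key : ⟪q i, (s j.1 : ℂ) • p j.1 - (c j.1 : ℂ) • f j.1⟫ = 0 := by
        simp only [inner_sub_right, inner_smul_right, hqp, hqf]
        by_cases h : i = j.1
        · rw [if_pos h, if_pos h, h]; ring
        · rw [if_neg h, if_neg h]; ring
      simpa only [hw, Sum.elim_inl, Sum.elim_inr, if_neg (Sum.inl_ne_inr (a := i) (b := j))] using key
    · have key : ⟪(s i.1 : ℂ) • p i.1 - (c i.1 : ℂ) • f i.1, q j⟫ = 0 := by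
        simp only [inner_sub_left, inner_smul_left, hpq, hfq, Complex.conj_ofReal]
        by_cases h : i.1 = j
        · rw [if_pos h, if_pos h, h]; ring
        · rw [if_neg h, if_neg h]; ring
      simpa only [hw, Sum.elim_inl, Sum.elim_inr, if_neg (show (Sum.inr i : Fin m ⊕ {i : Fin m // c i ≠ 1}) ≠ Sum.inl j from Sum.inr_ne_inl)] using key
    · have key : ⟪(s i.1 : ℂ) • p i.1 - (c i.1 : ℂ) • f i.1,
          (s j.1 : ℂ) • p j.1 - (c j.1 : ℂ) • f j.1⟫
          = if i.1 = j.1 then 1 else 0 := by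
        simp only [inner_sub_left, inner_sub_right, inner_smul_left, inner_smul_right,
          hp', hff, hpf, hfp, Complex.conj_ofReal]
        by_cases h : i.1 = j.1
        · simp [h]
          linear_combination hs2' j.1
        · simp only [if_neg h]; ring
      by_cases h : i = j
      · subst h; simpa [hw] using key
      · have h2 : i.1 ≠ j.1 := fun hh => h (Subtype.ext hh)
        simpa only [hw, Sum.elim_inl, Sum.elim_inr, if_neg (fun hh => h (Sum.inr_injective hh)), if_neg h2] using key
  obtain ⟨U, hU⟩ := exists_isometryEquiv_of_orthonormal hvon hwon
  have hUinl : ∀ i, U (p i) = q i := fun i => by simpa [hv, hw] using hU (Sum.inl i)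
  refine ⟨U, hUinl, fun i => ?_⟩
  by_cases h : c i = 1
  · have hpq1 : ⟪p i - q i, p i - q i⟫ = 0 := by
      rw [inner_sub_left, inner_sub_right, inner_sub_right, hp', hq', hpq, hqp]
      simp [h]
    have hpeq : p i = q i := sub_eq_zero.1 (inner_self_eq_zero.1 hpq1)
    rw [← hpeq, hUinl, hpeq]
  · have hsC : (s i : ℂ) ≠ 0 := hsne ⟨i, h⟩
    have hexp : ((s i:ℂ)) • f i = q i - (c i:ℂ) • p i := by
      rw [hfdef, smul_smul, mul_inv_cancel₀ hsC, one_smul, hAdef]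
    have hkey : q i = (c i : ℂ) • v (Sum.inl i) + (s i : ℂ) • v (Sum.inr ⟨i, h⟩) := by
      simp only [hv, Sum.elim_inl, Sum.elim_inr]
      rw [hexp]
      simp
    rw [hkey, map_add, map_smul, map_smul, hU, hU]
    simp only [hw, Sum.elim_inl, Sum.elim_inr]
    have hcomb : (c i:ℂ) • q i + (s i:ℂ) • ((s i:ℂ) • p i - (c i:ℂ) • f i)
        = ((s i:ℂ)^2 + (c i:ℂ)^2) • p i
          + (c i:ℂ) • ((q i - (c i:ℂ) • p i) - (s i:ℂ) • f i) := by
      module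
    rw [hcomb, hexp, sub_self, smul_zero, add_zero, hs2' i]
    simp

/-- Any two subspaces of the same dimension can be swapped by a unitary. -/
lemma exists_isometry_swap {E : Type*} [NormedAddCommGroup E]
    [InnerProductSpace ℂ E] [FiniteDimensional ℂ E] (P Q : Submodule ℂ E)
    (h : finrank ℂ P = finrank ℂ Q) :
    ∃ U : E ≃ₗᵢ[ℂ] E, P.map (U.toLinearEquiv.toLinearMap) = Q ∧
      Q.map (U.toLinearEquiv.toLinearMap) = P := by
  classical
  set m := finrank ℂ P with hm
  -- the operator S : P → Q and T : P → P
  set S : P →ₗ[ℂ] Q := (Q.orthogonalProjection).toLinearMap ∘ₗ P.subtype with hS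
  set T : P →ₗ[ℂ] P :=
    (P.orthogonalProjection).toLinearMap ∘ₗ Q.subtype ∘ₗ S with hT
  have hSapp : ∀ x : P, S x = Q.orthogonalProjection (x : E) := fun _ => rfl
  have hTapp : ∀ x : P, T x = P.orthogonalProjection ((S x : E)) := fun _ => rfl
  -- key inner product identity
  have hprojL : ∀ (K : Submodule ℂ E) (u : E) (w : K),
      (⟪u, (w : E)⟫ : ℂ) = ⟪((K.orthogonalProjection u : K) : E), (w : E)⟫ := by
    intro K u w
    rw [← Submodule.coe_inner, Submodule.inner_orthogonalProjectionOnto_eq_of_mem_right]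
  have hprojR : ∀ (K : Submodule ℂ E) (u : E) (w : K),
      (⟪(w : E), u⟫ : ℂ) = ⟪(w : E), ((K.orthogonalProjection u : K) : E)⟫ := by
    intro K u w
    rw [← Submodule.coe_inner, Submodule.inner_orthogonalProjectionOnto_eq_of_mem_left]
  have key : ∀ x y : P, (⟪T x, y⟫ : ℂ) = ⟪S x, S y⟫ := by
    intro x y
    rw [Submodule.coe_inner, Submodule.coe_inner, hTapp x, ← hprojL P (↑(S x)) y,
      hprojR Q (↑y) (S x), hSapp y]
  have hsym : T.IsSymmetric := by
    intro x y
    rw [key x y, ← inner_conj_symm (S x) (S y), ← key y x, inner_conj_symm]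
  have hmP : finrank ℂ P = m := rfl
  set b := hsym.eigenvectorBasis hmP with hb
  set μ := hsym.eigenvalues hmP with hμ
  have hTb : ∀ i, T (b i) = (μ i : ℂ) • b i := by
    intro i
    have := (hsym.hasEigenvector_eigenvectorBasis hmP i).1
    rwa [Module.End.mem_eigenspace_iff] at this
  have hb' := orthonormal_iff_ite.1 b.orthonormal
  have hSbb : ∀ i j, (⟪S (b i), S (b j)⟫ : ℂ) = if i = j then (μ i : ℂ) else 0 := by
    intro i j
    rw [← key, hTb i, inner_smul_left, hb', Complex.conj_ofReal]
    by_cases hij : i = j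
    · simp [hij]
    · simp [hij]
  set c : Fin m → ℝ := fun i => ‖S (b i)‖ with hc
  have hc2 : ∀ i, ((c i : ℂ))^2 = (μ i : ℂ) := by
    intro i
    have h0 := hSbb i i
    rw [if_pos rfl] at h0
    rw [← h0, inner_self_eq_norm_sq_to_K]
    norm_cast
  have hc0 : ∀ i, 0 ≤ c i := fun i => norm_nonneg _
  have hc1 : ∀ i, c i ≤ 1 := by
    intro i
    have h1 : ‖S (b i)‖ ≤ ‖Q.orthogonalProjection‖ * ‖(b i : E)‖ :=
      (Q.orthogonalProjection).le_opNorm _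
    have h2 : ‖(b i : E)‖ = 1 := by
      have h3 := b.orthonormal.1 i
      rwa [← Submodule.norm_coe] at h3
    calc c i ≤ ‖Q.orthogonalProjection‖ * ‖(b i : E)‖ := h1
      _ ≤ 1 * 1 := by
          rw [h2]
          exact mul_le_mul_of_nonneg_right (Submodule.orthogonalProjection_norm_le Q) zero_le_one
      _ = 1 := by norm_num
  -- the orthonormal family in Q
  set v : Fin m → Q := fun i => ((c i : ℂ))⁻¹ • S (b i) with hv
  have hQm : finrank ℂ Q = Fintype.card (Fin m) := by simp [← h, hm]
  have hvon : Orthonormal ℂ (Set.restrict {i | c i ≠ 0} v) := by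
    rw [orthonormal_iff_ite]
    intro i j
    simp only [Set.restrict_apply, Set.restrict, hv, inner_smul_left, inner_smul_right, hSbb, map_inv₀,
      Complex.conj_ofReal]
    by_cases hij : (i : Fin m) = (j : Fin m)
    · have hij' : i = j := Subtype.ext hij
      subst hij'
      rw [if_pos rfl, if_pos rfl, ← hc2 i]
      have hne : ((c i : ℂ)) ≠ 0 := Complex.ofReal_ne_zero.2 (by exact i.2)
      field_simp
    · have hij' : i ≠ j := fun hh => hij (congrArg _ hh)
      rw [if_neg hij, if_neg hij']
      ring
  obtain ⟨bq, hbq⟩ := hvon.exists_orthonormalBasis_extension_of_card_eq hQm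
  -- the two orthonormal families in E
  set p : Fin m → E := fun i => (b i : E) with hp
  set q : Fin m → E := fun i => (bq i : E) with hq
  have hpon : Orthonormal ℂ p := by
    rw [orthonormal_iff_ite]
    intro i j
    rw [hp]
    rw [← Submodule.coe_inner, hb']
  have hqon : Orthonormal ℂ q := by
    rw [orthonormal_iff_ite]
    intro i j
    rw [hq, ← Submodule.coe_inner, orthonormal_iff_ite.1 bq.orthonormal]
  have hSzero : ∀ i, c i = 0 → S (b i) = 0 := by
    intro i hi
    have h0 : ‖S (b i)‖ = 0 := hi
    rwa [norm_eq_zero] at h0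
  have hSv : ∀ i, c i ≠ 0 → S (b i) = (c i : ℂ) • bq i := by
    intro i hi
    rw [hbq i hi, hv]
    rw [smul_smul, mul_inv_cancel₀ (by simpa using hi), one_smul]
  have hpq : ∀ i j, (⟪p i, q j⟫ : ℂ) = if i = j then (c i : ℂ) else 0 := by
    intro i j
    have step : (⟪p i, q j⟫ : ℂ) = ⟪S (b i), bq j⟫ := by
      rw [Submodule.coe_inner, hSapp, hp, hq, hprojL Q ((b i : E)) (bq j)]
    rw [step]
    by_cases hi : c i = 0
    · rw [hSzero i hi]
      simp only [inner_zero_left]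
      by_cases hij : i = j
      · rw [if_pos hij, hi]; simp
      · rw [if_neg hij]
    · rw [hSv i hi, inner_smul_left, orthonormal_iff_ite.1 bq.orthonormal,
        Complex.conj_ofReal]
      by_cases hij : i = j
      · rw [if_pos hij, if_pos hij]; ring
      · rw [if_neg hij, if_neg hij]; ring
  obtain ⟨U, hU1, hU2⟩ := exists_isometry_swap_core hpon hqon hc0 hc1 hpq
  have hPspan : P = Submodule.span ℂ (Set.range p) := by
    have h1 : Set.range p = P.subtype '' Set.range (b : Fin m → P) := by
      rw [← Set.range_comp]; rfl
    rw [h1, ← Submodule.map_span, ← b.coe_toBasis, b.toBasis.span_eq, Submodule.map_top,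
      Submodule.range_subtype]
  have hQspan : Q = Submodule.span ℂ (Set.range q) := by
    have h1 : Set.range q = Q.subtype '' Set.range (bq : Fin m → Q) := by
      rw [← Set.range_comp]; rfl
    rw [h1, ← Submodule.map_span, ← bq.coe_toBasis, bq.toBasis.span_eq, Submodule.map_top,
      Submodule.range_subtype]
  refine ⟨U, ?_, ?_⟩
  · rw [hPspan, Submodule.map_span, ← Set.range_comp, hQspan]
    congr 1
    ext x
    constructor
    · rintro ⟨i, rfl⟩; exact ⟨i, (hU1 i).symm⟩
    · rintro ⟨i, rfl⟩; exact ⟨i, hU1 i⟩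
  · rw [hQspan, Submodule.map_span, ← Set.range_comp, hPspan]
    congr 1
    ext x
    constructor
    · rintro ⟨i, rfl⟩; exact ⟨i, (hU2 i).symm⟩
    · rintro ⟨i, rfl⟩; exact ⟨i, hU2 i⟩

variable {G : Type*} [Group G] {n : ℕ}

lemma toEuclideanLin_mul (A B : Matrix (Fin n) (Fin n) ℂ) :
    Matrix.toEuclideanLin (A * B) = (Matrix.toEuclideanLin A) ∘ₗ (Matrix.toEuclideanLin B) := by
  ext x
  simp [Matrix.toEuclideanLin_apply, Matrix.mulVec_mulVec]

lemma toEuclideanLin_one :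
    Matrix.toEuclideanLin (1 : Matrix (Fin n) (Fin n) ℂ) = LinearMap.id := by
  ext x
  simp [Matrix.toEuclideanLin_apply]

lemma act_mul (ρ : G →* Matrix.unitaryGroup (Fin n) ℂ) (g h : G) :
    act ρ (g * h) = act ρ g ∘ₗ act ρ h := by
  unfold act
  rw [map_mul]
  rw [show ((ρ g * ρ h : Matrix.unitaryGroup (Fin n) ℂ) : Matrix (Fin n) (Fin n) ℂ)
      = (ρ g : Matrix (Fin n) (Fin n) ℂ) * (ρ h : Matrix (Fin n) (Fin n) ℂ) from rfl]
  exact toEuclideanLin_mul _ _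

lemma act_one (ρ : G →* Matrix.unitaryGroup (Fin n) ℂ) : act ρ 1 = LinearMap.id := by
  unfold act
  rw [map_one]
  exact toEuclideanLin_one

lemma act_inner (ρ : G →* Matrix.unitaryGroup (Fin n) ℂ) (g : G)
    (x y : EuclideanSpace ℂ (Fin n)) : ⟪act ρ g x, act ρ g y⟫ = ⟪x, y⟫ := by
  have hadj : LinearMap.adjoint (act ρ g) ∘ₗ act ρ g = LinearMap.id := by
    unfold act
    rw [← Matrix.toEuclideanLin_conjTranspose_eq_adjoint, ← toEuclideanLin_mul]
    have hmem := (ρ g).2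
    rw [Matrix.mem_unitaryGroup_iff'] at hmem
    rw [← Matrix.star_eq_conjTranspose, hmem]
    exact toEuclideanLin_one
  calc ⟪act ρ g x, act ρ g y⟫
      = ⟪x, (LinearMap.adjoint (act ρ g) ∘ₗ act ρ g) y⟫ := by
        rw [LinearMap.comp_apply, LinearMap.adjoint_inner_right]
    _ = ⟪x, y⟫ := by rw [hadj]; rfl

noncomputable def actIso (ρ : G →* Matrix.unitaryGroup (Fin n) ℂ) (g : G) :
    EuclideanSpace ℂ (Fin n) ≃ₗᵢ[ℂ] EuclideanSpace ℂ (Fin n) :=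
  LinearEquiv.isometryOfInner
    (LinearEquiv.ofLinear (act ρ g) (act ρ g⁻¹)
      (by rw [← act_mul, mul_inv_cancel, act_one])
      (by rw [← act_mul, inv_mul_cancel, act_one]))
    (fun x y => act_inner ρ g x y)

lemma actIso_coe (ρ : G →* Matrix.unitaryGroup (Fin n) ℂ) (g : G) :
    (actIso ρ g).toLinearEquiv.toLinearMap = act ρ g := rfl

lemma map_act_mul (ρ : G →* Matrix.unitaryGroup (Fin n) ℂ)
    (W : Submodule ℂ (EuclideanSpace ℂ (Fin n))) (g h : G) :
    W.map (act ρ (g * h)) = (W.map (act ρ h)).map (act ρ g) := by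
  rw [act_mul, Submodule.map_comp]

lemma finrank_map_act (ρ : G →* Matrix.unitaryGroup (Fin n) ℂ)
    (W : Submodule ℂ (EuclideanSpace ℂ (Fin n))) (g : G) :
    finrank ℂ (W.map (act ρ g)) = finrank ℂ W := by
  have := (actIso ρ g).toLinearEquiv.finrank_map_eq W
  rwa [show ((actIso ρ g).toLinearEquiv : EuclideanSpace ℂ (Fin n) →ₗ[ℂ] EuclideanSpace ℂ (Fin n))
    = act ρ g from rfl] at this

lemma trans_lin {E : Type*} [NormedAddCommGroup E] [InnerProductSpace ℂ E]
    (e f : E ≃ₗᵢ[ℂ] E) (W : Submodule ℂ E) :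
    W.map ((e.trans f).toLinearEquiv.toLinearMap)
      = (W.map e.toLinearEquiv.toLinearMap).map f.toLinearEquiv.toLinearMap := by
  rw [← Submodule.map_comp]; rfl


end Helpers

open Module in
/-- if `H` is the stabilizer of `W` in `G`, then for
`g ∈ H g₀ H ∪ H g₀⁻¹ H` the pairs `(W, ρ(g)W)` and `(W, ρ(g₀)W)` have the same set of
principal angles; and the number of distinct sets of principal angles between pairs of
distinct elements of the orbit of `W` is at most the number of orbits of `G` on unordered
pairs of distinct elements of `G/H`. -/
theorem stmt3 {G : Type*} [Group G] [Fintype G] {n : ℕ}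
    (ρ : G →* Matrix.unitaryGroup (Fin n) ℂ) (H : Subgroup G)
    (W : Submodule ℂ (EuclideanSpace ℂ (Fin n)))
    (hstab : ∀ g : G, W.map (act ρ g) = W ↔ g ∈ H) :
    (∀ g₀ g : G,
      ((∃ a ∈ H, ∃ b ∈ H, g = a * g₀ * b) ∨ (∃ a ∈ H, ∃ b ∈ H, g = a * g₀⁻¹ * b)) →
        samePA W (W.map (act ρ g)) W (W.map (act ρ g₀))) ∧
    (∃ R : Set (G × G),
      Nat.card R ≤
        Nat.card (Quot (fun p q : {p : (G ⧸ H) × (G ⧸ H) // p.1 ≠ p.2} =>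
          ∃ g : G, (g • p.val.1, g • p.val.2) = q.val ∨
            (g • p.val.1, g • p.val.2) = (q.val.2, q.val.1))) ∧
      ∀ g₁ g₂ : G, W.map (act ρ g₁) ≠ W.map (act ρ g₂) →
        ∃ r ∈ R, samePA (W.map (act ρ g₁)) (W.map (act ρ g₂))
          (W.map (act ρ r.1)) (W.map (act ρ r.2))) := by
  classical
  have hmapH : ∀ (x h : G), h ∈ H → W.map (act ρ (x * h)) = W.map (act ρ x) := by
    intro x h hh
    rw [map_act_mul, (hstab h).2 hh]
  have hcoset : ∀ x y : G, (QuotientGroup.mk x : G ⧸ H) = QuotientGroup.mk y →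
      W.map (act ρ x) = W.map (act ρ y) := by
    intro x y hxy
    rw [QuotientGroup.eq] at hxy
    have hy : y = x * (x⁻¹ * y) := by group
    rw [hy, hmapH x _ hxy]
  have hswap : ∀ x y : G, ∃ S : EuclideanSpace ℂ (Fin n) ≃ₗᵢ[ℂ] EuclideanSpace ℂ (Fin n),
      (W.map (act ρ x)).map S.toLinearEquiv.toLinearMap = W.map (act ρ y) ∧
      (W.map (act ρ y)).map S.toLinearEquiv.toLinearMap = W.map (act ρ x) :=
    fun x y => exists_isometry_swap _ _ (by rw [finrank_map_act, finrank_map_act])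
  constructor
  · rintro g₀ g (⟨a, ha, b, hb, rfl⟩ | ⟨a, ha, b, hb, rfl⟩)
    · refine ⟨actIso ρ a⁻¹, ?_, ?_⟩
      · rw [actIso_coe]; exact (hstab a⁻¹).2 (inv_mem ha)
      · rw [actIso_coe, ← Submodule.map_comp, ← act_mul]
        have h1 : a⁻¹ * (a * g₀ * b) = g₀ * b := by group
        rw [h1, hmapH g₀ b hb]
    · obtain ⟨S, hS1, hS2⟩ := hswap 1 g₀
      have hWid : W.map (act ρ 1) = W := by rw [act_one]; exact Submodule.map_id W
      rw [hWid] at hS1 hS2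
      refine ⟨((actIso ρ a⁻¹).trans (actIso ρ g₀)).trans S, ?_, ?_⟩
      · rw [trans_lin, trans_lin, actIso_coe, actIso_coe,
          (hstab a⁻¹).2 (inv_mem ha), hS2]
      · have e1 : (W.map (act ρ (a * g₀⁻¹ * b))).map (act ρ a⁻¹) = W.map (act ρ g₀⁻¹) := by
          rw [← Submodule.map_comp, ← act_mul]
          have h1 : a⁻¹ * (a * g₀⁻¹ * b) = g₀⁻¹ * b := by group
          rw [h1, hmapH g₀⁻¹ b hb]
        have e2 : (W.map (act ρ g₀⁻¹)).map (act ρ g₀) = W := by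
          rw [← Submodule.map_comp, ← act_mul, mul_inv_cancel, act_one, Submodule.map_id]
        rw [trans_lin, trans_lin, actIso_coe, actIso_coe, e1, e2, hS1]
  · set K := {p : (G ⧸ H) × (G ⧸ H) // p.1 ≠ p.2} with hK
    set rel : K → K → Prop := fun p q => ∃ g : G, (g • p.val.1, g • p.val.2) = q.val ∨
        (g • p.val.1, g • p.val.2) = (q.val.2, q.val.1) with hrel
    have pext : ∀ {a b c d : G ⧸ H}, (a, b) = (c, d) → a = c ∧ b = d := by
      intro a b c d h
      simpa [Prod.ext_iff] using h
    have hequiv : Equivalence rel := by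
      constructor
      · intro p
        exact ⟨1, Or.inl (by simp)⟩
      · rintro p q ⟨g, hg | hg⟩
        · obtain ⟨h1, h2⟩ := pext hg
          refine ⟨g⁻¹, Or.inl ?_⟩
          rw [← h1, ← h2, inv_smul_smul, inv_smul_smul]
        · obtain ⟨h1, h2⟩ := pext hg
          refine ⟨g⁻¹, Or.inr ?_⟩
          rw [← h1, ← h2, inv_smul_smul, inv_smul_smul]
      · rintro p q r ⟨g, hg | hg⟩ ⟨g', hg' | hg'⟩ <;>
          obtain ⟨h1, h2⟩ := pext hg <;>
          obtain ⟨h1', h2'⟩ := pext hg'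
        · refine ⟨g' * g, Or.inl ?_⟩
          rw [mul_smul, mul_smul, h1, h2]
          exact Prod.ext_iff.2 ⟨h1', h2'⟩
        · refine ⟨g' * g, Or.inr ?_⟩
          rw [mul_smul, mul_smul, h1, h2]
          exact Prod.ext_iff.2 ⟨h1', h2'⟩
        · refine ⟨g' * g, Or.inr ?_⟩
          rw [mul_smul, mul_smul, h1, h2]
          exact Prod.ext_iff.2 ⟨h2', h1'⟩
        · refine ⟨g' * g, Or.inl ?_⟩
          rw [mul_smul, mul_smul, h1, h2]
          exact Prod.ext_iff.2 ⟨h2', h1'⟩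
    set F : Quot rel → G × G :=
      fun t => (Quotient.out (Quot.out t).val.1, Quotient.out (Quot.out t).val.2) with hF
    refine ⟨Set.range F, ?_, ?_⟩
    · have hsurj : Function.Surjective
          (fun t : Quot rel => (⟨F t, Set.mem_range_self t⟩ : Set.range F)) := by
        rintro ⟨r, t, rfl⟩
        exact ⟨t, rfl⟩
      exact Nat.card_le_card_of_surjective _ hsurj
    · intro g₁ g₂ hne
      have hne' : (QuotientGroup.mk g₁ : G ⧸ H) ≠ QuotientGroup.mk g₂ :=
        fun h => hne (hcoset g₁ g₂ h)
      set pk : K := ⟨(QuotientGroup.mk g₁, QuotientGroup.mk g₂), hne'⟩ with hpk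
      set t : Quot rel := Quot.mk rel pk with ht
      refine ⟨F t, Set.mem_range_self t, ?_⟩
      have hrel0 : rel pk t.out := by
        have h1 : Quot.mk rel pk = Quot.mk rel t.out := by rw [Quot.out_eq]
        exact (hequiv.eqvGen_iff).1 (Quot.eq.1 h1)
      have hout1 : (QuotientGroup.mk (F t).1 : G ⧸ H) = t.out.val.1 :=
        QuotientGroup.out_eq' _
      have hout2 : (QuotientGroup.mk (F t).2 : G ⧸ H) = t.out.val.2 :=
        QuotientGroup.out_eq' _
      obtain ⟨g, hg | hg⟩ := hrel0
      · obtain ⟨h1, h2⟩ := pext hg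
        refine ⟨actIso ρ g, ?_, ?_⟩
        · rw [actIso_coe, ← map_act_mul]
          exact hcoset _ _ (h1.trans hout1.symm)
        · rw [actIso_coe, ← map_act_mul]
          exact hcoset _ _ (h2.trans hout2.symm)
      · obtain ⟨h1, h2⟩ := pext hg
        obtain ⟨S, hS1, hS2⟩ := hswap (F t).1 (F t).2
        refine ⟨(actIso ρ g).trans S, ?_, ?_⟩
        · rw [trans_lin, actIso_coe, ← map_act_mul,
            hcoset (g * g₁) (F t).2 (h1.trans hout2.symm), hS2]
        · rw [trans_lin, actIso_coe, ← map_act_mul,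
            hcoset (g * g₂) (F t).1 (h2.trans hout1.symm), hS1]
end

section
/- In a configuration of N subspaces in G_{m,n} attaining equality in the simplex bound d_c² = (m(n−m)/n)·(N/(N−1)), the chordal distance between every pair of distinct subspaces is the same (the configuration is simplicial). -/
open scoped Matrix

open Complex Matrix in
lemma key_cs {n : ℕ} (S : Matrix (Fin n) (Fin n) ℂ) (hS : S.IsHermitian) :
    (S.trace.re)^2 ≤ (n : ℝ) * ((S*S).trace).re := by
  have hre : ∀ i j, (S i j * S j i).re = Complex.normSq (S j i) := by
    intro i j
    have h : S i j = star (S j i) := by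
      rw [← hS.apply i j]
    rw [h]
    simp [Complex.star_def, Complex.normSq_apply, Complex.mul_re]
  have htr2 : ((S*S).trace).re = ∑ i, ∑ j, Complex.normSq (S j i) := by
    simp only [Matrix.trace, Matrix.mul_apply, Matrix.diag_apply, Complex.re_sum]
    exact Finset.sum_congr rfl fun i _ => Finset.sum_congr rfl fun j _ => hre i j
  have hdiag : ∀ i, ((S i i).re)^2 ≤ ∑ j, Complex.normSq (S j i) := by
    intro i
    calc ((S i i).re)^2 ≤ Complex.normSq (S i i) := by
          rw [Complex.normSq_apply]; nlinarith [sq_nonneg (S i i).im]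
      _ ≤ ∑ j, Complex.normSq (S j i) :=
          Finset.single_le_sum (f := fun j => Complex.normSq (S j i)) (fun j _ => Complex.normSq_nonneg _) (Finset.mem_univ i)
  have h1 : S.trace.re = ∑ i, (S i i).re := by
    simp [Matrix.trace, Complex.re_sum, Matrix.diag_apply]
  calc (S.trace.re)^2 = (∑ i, (S i i).re)^2 := by rw [h1]
    _ ≤ (Finset.univ : Finset (Fin n)).card * ∑ i, ((S i i).re)^2 :=
        sq_sum_le_card_mul_sum_sq
    _ = (n:ℝ) * ∑ i, ((S i i).re)^2 := by simp
    _ ≤ (n:ℝ) * ∑ i, ∑ j, Complex.normSq (S j i) := by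
        gcongr with i _; exact hdiag i
    _ = (n:ℝ) * ((S*S).trace).re := by rw [htr2]

lemma trace_proj {n : ℕ} (W : Submodule ℂ (EuclideanSpace ℂ (Fin n))) :
    LinearMap.trace ℂ _ (proj W) = (Module.finrank ℂ W : ℂ) := by
  have h : LinearMap.IsProj W (proj W) := by
    constructor
    · intro x; exact (W.orthogonalProjection x).2
    · intro x hx
      exact congrArg Subtype.val (W.orthogonalProjectionOnto_mem_subspace_eq_self ⟨x, hx⟩)
  exact h.trace

lemma projM_herm {n : ℕ} (W : Submodule ℂ (EuclideanSpace ℂ (Fin n))) :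
    (Matrix.toEuclideanLin.symm (proj W)).IsHermitian := by
  rw [Matrix.isHermitian_iff_isSymmetric, LinearEquiv.apply_symm_apply]
  exact fun x y => W.starProjection_isSymmetric x y

lemma trace_eq_mtrace {n : ℕ} (f : EuclideanSpace ℂ (Fin n) →ₗ[ℂ] EuclideanSpace ℂ (Fin n)) :
    LinearMap.trace ℂ _ f = (Matrix.toEuclideanLin.symm f).trace := by
  rw [LinearMap.trace_eq_matrix_trace ℂ (PiLp.basisFun 2 ℂ (Fin n)) f]
  rfl

lemma mtrace_mul {n : ℕ} (f g : EuclideanSpace ℂ (Fin n) →ₗ[ℂ] EuclideanSpace ℂ (Fin n)) :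
    Matrix.toEuclideanLin.symm (f ∘ₗ g) =
      Matrix.toEuclideanLin.symm f * Matrix.toEuclideanLin.symm g := by
  apply Matrix.toEuclideanLin.injective
  simp [Matrix.toEuclideanLin_eq_toLin, Matrix.toLin_mul _ (PiLp.basisFun 2 ℂ (Fin n))]

/-- a configuration of `N` `m`-dimensional subspaces of `ℂⁿ` attaining
equality in the simplex bound is simplicial: every pair of distinct subspaces is at the
same (squared) chordal distance `(m(n−m)/n)·(N/(N−1))`. -/
theorem stmt10 {n m N : ℕ} (hN : 1 < N)
    (P : Fin N → Submodule ℂ (EuclideanSpace ℂ (Fin n)))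
    (hm : ∀ i, Module.finrank ℂ (P i) = m) (hdist : ∀ i j, i ≠ j → P i ≠ P j)
    (hbound : ∀ i j, i ≠ j →
      ((m : ℝ) * (n - m) / n) * (N / (N - 1)) ≤ dc2 (P i) (P j)) :
    ∀ i j, i ≠ j → dc2 (P i) (P j) = ((m : ℝ) * (n - m) / n) * (N / (N - 1)) := by
  by_cases hn : n = 0
  · exfalso
    subst hn
    have h0 : (⟨0, by omega⟩ : Fin N) ≠ (⟨1, by omega⟩ : Fin N) := by
      simp
    exact hdist _ _ h0 (Subsingleton.elim _ _)
  have hn' : (0 : ℝ) < n := by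
    have : 0 < n := Nat.pos_of_ne_zero hn
    exact_mod_cast this
  have hN1 : (0 : ℝ) < (N : ℝ) - 1 := by
    have : (1 : ℝ) < N := by exact_mod_cast hN
    linarith
  set B : ℝ := ((m : ℝ) * (n - m) / n) * (N / (N - 1)) with hB
  set t : Fin N → Fin N → ℝ :=
    fun a b => (LinearMap.trace ℂ _ (proj (P a) ∘ₗ proj (P b))).re with htdef
  have hdc : ∀ a b, dc2 (P a) (P b) = (m : ℝ) - t a b := by
    intro a b
    rw [dc2, trace_proj, hm a, Complex.sub_re, Complex.natCast_re, htdef]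
  have htii : ∀ a, t a a = (m : ℝ) := by
    intro a
    have hcomp : proj (P a) ∘ₗ proj (P a) = proj (P a) := by
      apply LinearMap.ext
      intro x
      simp [proj, Submodule.orthogonalProjectionOnto_mem_subspace_eq_self,
        Submodule.starProjection_eq_self_iff, Submodule.starProjection_apply_mem]
    rw [htdef]
    simp only [hcomp]
    rw [trace_proj, hm a, Complex.natCast_re]
  set Mt : Fin N → Matrix (Fin n) (Fin n) ℂ :=
    fun a => Matrix.toEuclideanLin.symm (proj (P a)) with hMt
  have hH : (∑ a, Mt a).IsHermitian := by
    rw [Matrix.IsHermitian, Matrix.conjTranspose_sum]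
    exact Finset.sum_congr rfl fun a _ => (projM_herm (P a)).eq
  have htrM : ∀ a b, t a b = ((Mt a * Mt b).trace).re := by
    intro a b
    rw [htdef, hMt]
    simp only []
    rw [← mtrace_mul, ← trace_eq_mtrace]
  have htrMa : ∀ a, (Mt a).trace = (m : ℂ) := by
    intro a
    rw [hMt]
    simp only []
    rw [← trace_eq_mtrace, trace_proj, hm a]
  -- key inequality from Cauchy-Schwarz
  have hkey : ((N : ℝ) * m)^2 ≤ (n : ℝ) * ∑ a, ∑ b, t a b := by
    have h1 := key_cs (∑ a, Mt a) hH
    have h2 : (∑ a, Mt a).trace = ((N : ℂ) * m) := by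
      rw [Matrix.trace_sum]
      simp [htrMa, Finset.sum_const, Finset.card_univ]
    have h3 : (((∑ a, Mt a) * (∑ a, Mt a)).trace).re = ∑ a, ∑ b, t a b := by
      rw [Finset.sum_mul_sum]
      rw [Matrix.trace_sum]
      rw [Complex.re_sum]
      refine Finset.sum_congr rfl fun a _ => ?_
      rw [Matrix.trace_sum, Complex.re_sum]
      exact Finset.sum_congr rfl fun b _ => (htrM a b).symm
    rw [h2, h3] at h1
    have h4 : (((N : ℂ) * m)).re = (N : ℝ) * m := by
      simp
    rw [h4] at h1
    exact h1
  -- split diagonal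
  have hsplit : ∑ a, ∑ b, t a b
      = (N : ℝ) * m + ∑ a, ∑ b ∈ Finset.univ.erase a, t a b := by
    have h1 : ∀ a : Fin N, ∑ b, t a b = t a a + ∑ b ∈ Finset.univ.erase a, t a b :=
      fun a => (Finset.add_sum_erase _ _ (Finset.mem_univ a)).symm
    rw [Finset.sum_congr rfl fun a _ => h1 a, Finset.sum_add_distrib]
    congr 1
    simp [htii, Finset.sum_const, Finset.card_univ, mul_comm]
  have hO : ((N : ℝ) * m)^2 / n - (N : ℝ) * m
      ≤ ∑ a, ∑ b ∈ Finset.univ.erase a, t a b := by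
    rw [hsplit] at hkey
    rw [div_sub' (ne_of_gt hn'), div_le_iff₀ hn']
    nlinarith
  -- the off-diagonal dc2 sum
  have hcard : ∀ a : Fin N, ((Finset.univ.erase a).card : ℝ) = (N : ℝ) - 1 := by
    intro a
    rw [Finset.card_erase_of_mem (Finset.mem_univ a), Finset.card_univ, Fintype.card_fin,
      Nat.cast_sub hN.le]
    simp
  have hsumdc : ∑ a, ∑ b ∈ Finset.univ.erase a, dc2 (P a) (P b)
      = (N : ℝ) * ((N : ℝ) - 1) * m - ∑ a, ∑ b ∈ Finset.univ.erase a, t a b := by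
    have h1 : ∀ a : Fin N, ∑ b ∈ Finset.univ.erase a, dc2 (P a) (P b)
        = ((N : ℝ) - 1) * m - ∑ b ∈ Finset.univ.erase a, t a b := by
      intro a
      rw [Finset.sum_congr rfl fun b _ => hdc a b, Finset.sum_sub_distrib,
        Finset.sum_const, nsmul_eq_mul, hcard a]
    rw [Finset.sum_congr rfl fun a _ => h1 a, Finset.sum_sub_distrib, Finset.sum_const,
      nsmul_eq_mul, Finset.card_univ, Fintype.card_fin]
    ring
  -- total ≤ N(N-1)B
  have hle : ∑ a, ∑ b ∈ Finset.univ.erase a, (dc2 (P a) (P b) - B) ≤ 0 := by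
    have h1 : ∑ a, ∑ b ∈ Finset.univ.erase a, (dc2 (P a) (P b) - B)
        = (∑ a, ∑ b ∈ Finset.univ.erase a, dc2 (P a) (P b))
          - (N : ℝ) * ((N : ℝ) - 1) * B := by
      have h2 : ∀ a : Fin N, ∑ b ∈ Finset.univ.erase a, (dc2 (P a) (P b) - B)
          = (∑ b ∈ Finset.univ.erase a, dc2 (P a) (P b)) - ((N : ℝ) - 1) * B := by
        intro a
        rw [Finset.sum_sub_distrib, Finset.sum_const, nsmul_eq_mul, hcard a]
      rw [Finset.sum_congr rfl fun a _ => h2 a, Finset.sum_sub_distrib, Finset.sum_const,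
        nsmul_eq_mul, Finset.card_univ, Fintype.card_fin]
      ring
    rw [h1, hsumdc]
    have hBval : (N : ℝ) * ((N : ℝ) - 1) * B = (N : ℝ)^2 * m * ((n : ℝ) - m) / n := by
      rw [hB]
      field_simp
    rw [hBval]
    have : (N : ℝ) * ((N : ℝ) - 1) * m - (((N : ℝ) * m)^2 / n - (N : ℝ) * m)
        - (N : ℝ)^2 * m * ((n : ℝ) - m) / n = 0 := by
      field_simp
      ring
    linarith [hO]
  -- nonnegativity and conclusion
  have hnonneg : ∀ a ∈ (Finset.univ : Finset (Fin N)),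
      ∀ b ∈ Finset.univ.erase a, (0 : ℝ) ≤ dc2 (P a) (P b) - B := by
    intro a _ b hb
    have hab : a ≠ b := (Finset.ne_of_mem_erase hb).symm
    have := hbound a b hab
    linarith
  have hzero : ∑ a, ∑ b ∈ Finset.univ.erase a, (dc2 (P a) (P b) - B) = 0 := by
    have hge : (0:ℝ) ≤ ∑ a, ∑ b ∈ Finset.univ.erase a, (dc2 (P a) (P b) - B) :=
      Finset.sum_nonneg fun a ha => Finset.sum_nonneg (hnonneg a ha)
    linarith
  intro i j hij
  have h1 := (Finset.sum_eq_zero_iff_of_nonneg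
    (fun a ha => Finset.sum_nonneg (hnonneg a ha))).mp hzero i (Finset.mem_univ i)
  have h2 := (Finset.sum_eq_zero_iff_of_nonneg (hnonneg i (Finset.mem_univ i))).mp h1 j
    (Finset.mem_erase.mpr ⟨hij.symm, Finset.mem_univ j⟩)
  linarith
end

section
/- If {Π₁,...,Π_N} are projection matrices of an optimal configuration of N subspaces of dimension m in ℂⁿ reaching the simplex bound d_c² = (m(n−m)/n)·(N/(N−1)), then for any positive integer k the matrices {I_k ⊗ Πᵢ} are projections onto km-dimensional subspaces of ℂ^{kn} forming a configuration of N subspaces whose minimal squared chordal distance is k·d_c², which again attains the simplex bound for parameters (km, kn, N). -/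
open scoped Matrix

open Kronecker in
/-- if `{Πᵢ}` are the projection matrices of a configuration of `N`
`m`-dimensional subspaces of `ℂⁿ` reaching the simplex bound, then for any `k > 0` the
matrices `I_k ⊗ Πᵢ` are projections onto `km`-dimensional subspaces of `ℂ^{kn}` forming a
configuration whose pairwise squared chordal distance is `k` times the original, again
attaining the simplex bound for the parameters `(km, kn, N)`. -/
theorem stmt11 {n m N k : ℕ} (hN : 1 < N) (hk : 0 < k)
    (P : Fin N → Matrix (Fin n) (Fin n) ℂ)
    (hherm : ∀ i, (P i).IsHermitian) (hidem : ∀ i, P i * P i = P i)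
    (htr : ∀ i, (P i).trace = (m : ℂ)) (hdist : ∀ i j, i ≠ j → P i ≠ P j)
    (hsimplex : ∀ i j, i ≠ j →
      dc2M (P i) (P j) = ((m : ℝ) * (n - m) / n) * (N / (N - 1))) :
    (∀ i, ((1 : Matrix (Fin k) (Fin k) ℂ) ⊗ₖ P i).IsHermitian) ∧
    (∀ i, ((1 : Matrix (Fin k) (Fin k) ℂ) ⊗ₖ P i) * ((1 : Matrix (Fin k) (Fin k) ℂ) ⊗ₖ P i)
        = (1 : Matrix (Fin k) (Fin k) ℂ) ⊗ₖ P i) ∧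
    (∀ i, ((1 : Matrix (Fin k) (Fin k) ℂ) ⊗ₖ P i).trace = ((k * m : ℕ) : ℂ)) ∧
    (∀ i j, i ≠ j →
      dc2M ((1 : Matrix (Fin k) (Fin k) ℂ) ⊗ₖ P i) ((1 : Matrix (Fin k) (Fin k) ℂ) ⊗ₖ P j)
        = (k : ℝ) * (((m : ℝ) * (n - m) / n) * (N / (N - 1)))) ∧
    (∀ i j, i ≠ j →
      dc2M ((1 : Matrix (Fin k) (Fin k) ℂ) ⊗ₖ P i) ((1 : Matrix (Fin k) (Fin k) ℂ) ⊗ₖ P j)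
        = (((k * m : ℕ) : ℝ) * ((k * n : ℕ) - (k * m : ℕ)) / (k * n : ℕ)) * (N / (N - 1))) := by
  have hherm' : ∀ i, ((1 : Matrix (Fin k) (Fin k) ℂ) ⊗ₖ P i).IsHermitian := by
    intro i
    ext ⟨a, b⟩ ⟨c, d⟩
    simp [Matrix.conjTranspose_apply, Matrix.kroneckerMap_apply, Matrix.one_apply,
      eq_comm (a := a), (hherm i).apply, mul_comm, apply_ite star]
  have htrk : ∀ i, ((1 : Matrix (Fin k) (Fin k) ℂ) ⊗ₖ P i).trace = ((k * m : ℕ) : ℂ) := by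
    intro i
    rw [Matrix.trace_kronecker, htr i, Matrix.trace_one]
    simp [Fintype.card_fin, mul_comm]
  have hmul : ∀ i j, ((1 : Matrix (Fin k) (Fin k) ℂ) ⊗ₖ P i) *
      ((1 : Matrix (Fin k) (Fin k) ℂ) ⊗ₖ P j) = (1 : Matrix (Fin k) (Fin k) ℂ) ⊗ₖ (P i * P j) := by
    intro i j
    rw [← Matrix.mul_kronecker_mul, one_mul]
  have hdc : ∀ i j, dc2M ((1 : Matrix (Fin k) (Fin k) ℂ) ⊗ₖ P i)
      ((1 : Matrix (Fin k) (Fin k) ℂ) ⊗ₖ P j) = (k : ℝ) * dc2M (P i) (P j) := by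
    intro i j
    simp only [dc2M, hmul, Matrix.trace_kronecker, Matrix.trace_one]
    rw [← mul_sub]
    simp [Complex.ofReal_mul]
  refine ⟨hherm', ?_, htrk, ?_, ?_⟩
  · intro i; rw [hmul, hidem]
  · intro i j hij; rw [hdc, hsimplex i j hij]
  · intro i j hij
    rw [hdc, hsimplex i j hij]
    rcases Nat.eq_zero_or_pos n with hn | hn
    · subst hn
      have hm : m = 0 := by
        have h := (htr i).symm
        simp [Matrix.trace] at h
        exact_mod_cast h
      subst hm
      simp
    · have hn' : (n : ℝ) ≠ 0 := Nat.cast_ne_zero.mpr hn.ne'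
      have hk' : (k : ℝ) ≠ 0 := Nat.cast_ne_zero.mpr hk.ne'
      have hN' : (N : ℝ) - 1 ≠ 0 := by
        have : (1 : ℝ) < N := by exact_mod_cast hN
        linarith
      push_cast
      field_simp
end

section
/- Let G ≤ Uₙ(ℂ) be a finite group such that the only elements with nonzero trace are ±I. Let 𝒮 be the set of abelian subgroups generated by −I and an order-2 element g ∉ {±I}. For S ∈ 𝒮 and χ a linear character of S with χ(−I) = −1, the isotypic projection (1/|S|)∑_{s∈S} χ(s)·s has rank n/2; the collection of all such isotypic subspaces over all S ∈ 𝒮 and both such characters is a family of 2|𝒮| subspaces of dimension m = n/2 in which the only squared chordal distances between distinct members are m and m/2. -/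
open scoped Matrix

/-- `star g = g` for a unitary involution. -/
lemma star_eq_self_of {R : Type*} [Monoid R] [StarMul R] {g : R}
    (h1 : star g * g = 1) (h2 : g * g = 1) : star g = g := by
  calc star g = star g * (g * g) := by rw [h2, mul_one]
    _ = (star g * g) * g := by rw [← mul_assoc]
    _ = g := by rw [h1, one_mul]

/-- for a finite subgroup `G ≤ Uₙ(ℂ)` in which only `±I` have nonzero
trace, the isotypic projections `(1/|S|)∑_{s∈S} χ(s)s` for `S = {I,−I,g,−g}` and `χ` a
linear character with `χ(−I) = −1` (concretely `(1/2)(I + εg)`, `ε = ±1`) are orthogonal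
projections of rank `n/2`; the family of all of them has cardinality `2|𝒮|` and the only
squared chordal distances between distinct members are `m = n/2` and `m/2 = n/4`. -/
theorem stmt15 {n : ℕ} (G : Subgroup (Matrix.unitaryGroup (Fin n) ℂ))
    (hfin : (G : Set (Matrix.unitaryGroup (Fin n) ℂ)).Finite)
    (htrace : ∀ u ∈ G, ((u : Matrix (Fin n) (Fin n) ℂ)).trace ≠ 0 →
      (u : Matrix (Fin n) (Fin n) ℂ) = 1 ∨ (u : Matrix (Fin n) (Fin n) ℂ) = -1) :
    let A : Set (Matrix (Fin n) (Fin n) ℂ) :=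
      {g | (∃ u ∈ G, (u : Matrix (Fin n) (Fin n) ℂ) = g) ∧ g * g = 1 ∧ g ≠ 1 ∧ g ≠ -1}
    let 𝒮 : Set (Set (Matrix (Fin n) (Fin n) ℂ)) :=
      {s | ∃ g ∈ A, s = {1, -1, g, -g}}
    let F : Set (Matrix (Fin n) (Fin n) ℂ) :=
      {p | ∃ g ∈ A, ∃ ε : ℂ, (ε = 1 ∨ ε = -1) ∧ p = (1 / 2 : ℂ) • (1 + ε • g)}
    (∀ p ∈ F, p.IsHermitian ∧ p * p = p ∧ p.trace = (n : ℂ) / 2) ∧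
    Nat.card F = 2 * Nat.card 𝒮 ∧
    (∀ p ∈ F, ∀ q ∈ F, p ≠ q →
      dc2M p q = (n : ℝ) / 2 ∨ dc2M p q = (n : ℝ) / 4) := by
  classical
  intro A 𝒮 F
  -- elements of `A` are traceless self-adjoint involutions
  have htr0 : ∀ g ∈ A, (g : Matrix (Fin n) (Fin n) ℂ).trace = 0 := by
    rintro g ⟨⟨u, hu, rfl⟩, hg2, hg1, hgm1⟩
    by_contra h
    rcases htrace u hu h with h' | h'
    · exact hg1 h'
    · exact hgm1 h'
  have hstarA : ∀ g ∈ A, star g = g := by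
    rintro g ⟨⟨u, hu, rfl⟩, hg2, -, -⟩
    exact star_eq_self_of (Matrix.UnitaryGroup.star_mul_self u) hg2
  have hpsi : ∀ (ε : ℂ) (g : Matrix (Fin n) (Fin n) ℂ),
      (2:ℂ) • ((1/2:ℂ) • (1 + ε • g)) - 1 = ε • g := by
    intro ε g
    rw [smul_smul]
    norm_num
  have hgneg : ∀ g ∈ A, g ≠ -g := by
    intro g hg he
    obtain ⟨-, hg2, hg1, -⟩ := hg
    have h0 : g + g = 0 := by nth_rewrite 2 [he]; simp
    have h2 : (2:ℂ) • g = 0 := by rw [two_smul]; exact h0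
    have hg0 : g = 0 := by
      rcases smul_eq_zero.mp h2 with h | h
      · exact absurd h (by norm_num)
      · exact h
    have h10 : (1 : Matrix (Fin n) (Fin n) ℂ) = 0 := by rw [← hg2, hg0, mul_zero]
    exact hg1 (by rw [hg0, h10])
  -- `ε • g` is never `±1`
  have hnotpm : ∀ g ∈ A, ∀ ε : ℂ, (ε = 1 ∨ ε = -1) → ε • g ≠ 1 ∧ ε • g ≠ -1 := by
    intro g hg ε hε
    obtain ⟨-, -, hg1, hgm1⟩ := hg
    rcases hε with rfl | rfl
    · simpa using ⟨hg1, hgm1⟩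
    · constructor
      · intro h
        apply hgm1
        rw [neg_one_smul] at h
        rw [← neg_neg g, h]
      · intro h
        apply hg1
        rw [neg_one_smul] at h
        rw [← neg_neg g, h, neg_neg]
  -- membership characterization in the 4-element sets
  have hmem4 : ∀ a ∈ A, ∀ x ∈ ({1, -1, a, -a} : Set (Matrix (Fin n) (Fin n) ℂ)),
      x ≠ 1 → x ≠ -1 →
      ({1, -1, x, -x} : Set (Matrix (Fin n) (Fin n) ℂ)) = {1, -1, a, -a} := by
    intro a ha x hx hx1 hxm1
    simp only [Set.mem_insert_iff, Set.mem_singleton_iff] at hx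
    rcases hx with rfl | rfl | rfl | rfl
    · exact absurd rfl hx1
    · exact absurd rfl hxm1
    · rfl
    · ext y
      simp only [Set.mem_insert_iff, Set.mem_singleton_iff, neg_neg]
      tauto
  -- Part 1
  have part1 : ∀ p ∈ F, p.IsHermitian ∧ p * p = p ∧ p.trace = (n : ℂ) / 2 := by
    rintro p ⟨g, hgA, ε, hε, rfl⟩
    obtain ⟨-, hg2, -, -⟩ := id hgA
    have hs := hstarA g hgA
    have htr := htr0 g hgA
    have hε2 : ε * ε = 1 := by rcases hε with rfl | rfl <;> ring
    have hεs : star ε = ε := by rcases hε with rfl | rfl <;> simp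
    refine ⟨?_, ?_, ?_⟩
    · unfold Matrix.IsHermitian
      rw [Matrix.conjTranspose_smul, Matrix.conjTranspose_add, Matrix.conjTranspose_smul,
        Matrix.conjTranspose_one, ← Matrix.star_eq_conjTranspose, hs, hεs]
      norm_num
    · have key : (ε • g) * (ε • g) = (1 : Matrix (Fin n) (Fin n) ℂ) := by
        rw [Matrix.smul_mul, Matrix.mul_smul, smul_smul, hε2, hg2, one_smul]
      rw [Matrix.smul_mul, Matrix.mul_smul, smul_smul, mul_add, add_mul, add_mul, one_mul,
        mul_one, key, one_mul]
      module
    · rw [Matrix.trace_smul, Matrix.trace_add, Matrix.trace_smul, Matrix.trace_one, htr]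
      simp [Fintype.card_fin, smul_eq_mul]
      ring
  refine ⟨part1, ?_, ?_⟩
  · -- cardinality
    have hA : A.Finite := by
      apply (Set.Finite.image (fun u : Matrix.unitaryGroup (Fin n) ℂ => (u : Matrix (Fin n) (Fin n) ℂ)) hfin).subset
      rintro g ⟨⟨u, hu, rfl⟩, -⟩
      exact ⟨u, hu, rfl⟩
    have h𝒮 : 𝒮.Finite := by
      apply (hA.image (fun g => ({1, -1, g, -g} : Set (Matrix (Fin n) (Fin n) ℂ)))).subset
      rintro s ⟨g, hg, rfl⟩
      exact ⟨g, hg, rfl⟩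
    have hFfin : F.Finite := by
      apply ((hA.image (fun g => (1/2:ℂ) • (1 + (1:ℂ) • g))).union
        (hA.image (fun g => (1/2:ℂ) • (1 + (-1:ℂ) • g)))).subset
      rintro p ⟨g, hg, ε, hε, rfl⟩
      rcases hε with rfl | rfl
      · exact Or.inl ⟨g, hg, rfl⟩
      · exact Or.inr ⟨g, hg, rfl⟩
    -- uniqueness of the set containing `2p - 1`
    have hkey2 : ∀ p ∈ F, ∀ S ∈ 𝒮, ((2:ℂ) • p - 1) ∈ S →
        S = ({1, -1, (2:ℂ) • p - 1, -((2:ℂ) • p - 1)} : Set (Matrix (Fin n) (Fin n) ℂ)) := by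
      rintro p ⟨g, hg, ε, hε, rfl⟩ S ⟨a, ha, rfl⟩ hmemS
      rw [hpsi] at hmemS ⊢
      obtain ⟨hx1, hxm1⟩ := hnotpm g hg ε hε
      exact (hmem4 a ha _ hmemS hx1 hxm1).symm
    have hcardF : Nat.card F = hFfin.toFinset.card := by
      rw [Nat.card_coe_set_eq, Set.ncard_eq_toFinset_card F hFfin]
    have hcardS : Nat.card 𝒮 = h𝒮.toFinset.card := by
      rw [Nat.card_coe_set_eq, Set.ncard_eq_toFinset_card 𝒮 h𝒮]
    rw [hcardF, hcardS]
    have hFbi : hFfin.toFinset =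
        h𝒮.toFinset.biUnion (fun S => hFfin.toFinset.filter (fun p => (2:ℂ) • p - 1 ∈ S)) := by
      ext p
      simp only [Finset.mem_biUnion, Finset.mem_filter, Set.Finite.mem_toFinset]
      constructor
      · intro hp
        obtain ⟨g, hg, ε, hε, rfl⟩ := hp
        refine ⟨{1, -1, g, -g}, ⟨g, hg, rfl⟩, ⟨g, hg, ε, hε, rfl⟩, ?_⟩
        rw [hpsi]
        rcases hε with rfl | rfl <;> simp
      · rintro ⟨S, -, hp, -⟩
        exact hp
    have hdisj : ∀ S ∈ h𝒮.toFinset, ∀ T ∈ h𝒮.toFinset, S ≠ T →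
        Disjoint (hFfin.toFinset.filter (fun p => (2:ℂ) • p - 1 ∈ S))
          (hFfin.toFinset.filter (fun p => (2:ℂ) • p - 1 ∈ T)) := by
      intro S hS T hT hST
      rw [Finset.disjoint_left]
      intro p hpS hpT
      simp only [Finset.mem_filter, Set.Finite.mem_toFinset] at hpS hpT
      rw [Set.Finite.mem_toFinset] at hS hT
      exact hST ((hkey2 p hpS.1 S hS hpS.2).trans (hkey2 p hpT.1 T hT hpT.2).symm)
    have hfib : ∀ S ∈ h𝒮.toFinset,
        (hFfin.toFinset.filter (fun p => (2:ℂ) • p - 1 ∈ S)).card = 2 := by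
      intro S hS
      rw [Set.Finite.mem_toFinset] at hS
      obtain ⟨g, hg, rfl⟩ := hS
      rw [Finset.card_eq_two]
      refine ⟨(1/2:ℂ) • (1 + (1:ℂ) • g), (1/2:ℂ) • (1 + (-1:ℂ) • g), ?_, ?_⟩
      · intro heq
        apply hgneg g hg
        have h2 : (1 + (1:ℂ) • g : Matrix (Fin n) (Fin n) ℂ) = 1 + (-1:ℂ) • g := by
          have h3 := congrArg (fun M : Matrix (Fin n) (Fin n) ℂ => (2:ℂ) • M) heq
          simpa [smul_smul] using h3
        have h4 := add_left_cancel h2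
        rw [one_smul, neg_one_smul] at h4
        exact h4
      · ext q
        simp only [Finset.mem_filter, Set.Finite.mem_toFinset, Finset.mem_insert,
          Finset.mem_singleton]
        constructor
        · rintro ⟨⟨b, hb, ε, hε, rfl⟩, hq⟩
          rw [hpsi] at hq
          obtain ⟨h1, h2⟩ := hnotpm b hb ε hε
          simp only [Set.mem_insert_iff, Set.mem_singleton_iff] at hq
          rcases hq with h | h | h | h
          · exact absurd h h1
          · exact absurd h h2
          · left; rw [h, one_smul]
          · right; rw [h, neg_one_smul]
        · rintro (rfl | rfl)
          · exact ⟨⟨g, hg, 1, Or.inl rfl, rfl⟩, by rw [hpsi, one_smul]; simp⟩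
          · exact ⟨⟨g, hg, -1, Or.inr rfl, rfl⟩, by rw [hpsi, neg_one_smul]; simp⟩
    rw [hFbi, Finset.card_biUnion hdisj, Finset.sum_congr rfl hfib, Finset.sum_const,
      smul_eq_mul, mul_comm]
  · -- distances
    rintro p ⟨g, hgA, ε, hε, rfl⟩ q ⟨h, hhA, δ, hδ, rfl⟩ hpq
    obtain ⟨⟨u, hu, hug⟩, hg2, hg1, hgm1⟩ := id hgA
    obtain ⟨⟨v, hv, hvh⟩, hh2, hh1, hhm1⟩ := id hhA
    have hne : ε • g ≠ δ • h := fun he => hpq (by rw [he])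
    have hexp : ((1/2:ℂ) • (1 + ε • g)) * ((1/2:ℂ) • (1 + δ • h)) =
        (1/4 : ℂ) • (1 + δ • h + ε • g + (ε * δ) • (g * h)) := by
      rw [Matrix.smul_mul, Matrix.mul_smul, smul_smul, mul_add, add_mul, add_mul, one_mul,
        mul_one, one_mul, Matrix.smul_mul, Matrix.mul_smul, smul_smul]
      module
    have htrpq : (((1/2:ℂ) • (1 + ε • g)) * ((1/2:ℂ) • (1 + δ • h))).trace =
        (1/4 : ℂ) * ((n : ℂ) + ε * δ * (g * h).trace) := by
      rw [hexp, Matrix.trace_smul, Matrix.trace_add, Matrix.trace_add, Matrix.trace_add,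
        Matrix.trace_smul, Matrix.trace_smul, Matrix.trace_smul, Matrix.trace_one,
        htr0 g hgA, htr0 h hhA]
      simp [Fintype.card_fin, smul_eq_mul]
    have htrp : ((1/2:ℂ) • (1 + ε • g)).trace = (n : ℂ) / 2 :=
      (part1 _ ⟨g, hgA, ε, hε, rfl⟩).2.2
    have hghc : ((u * v : Matrix.unitaryGroup (Fin n) ℂ) : Matrix (Fin n) (Fin n) ℂ) = g * h := by
      rw [← hug, ← hvh]; rfl
    by_cases h0 : (g * h).trace = 0
    · right
      simp only [dc2M]
      rw [htrp, htrpq, h0]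
      have heq : (n : ℂ) / 2 - 1/4 * ((n : ℂ) + ε * δ * 0) = (((n : ℝ) / 4 : ℝ) : ℂ) := by
        push_cast; ring
      rw [heq, Complex.ofReal_re]
    · left
      have hpm := htrace (u * v) (mul_mem hu hv) (by rwa [hghc])
      rw [hghc] at hpm
      have hkey : ε * δ * (g * h).trace = -(n : ℂ) := by
        rcases hpm with h1 | h1
        · have hh : h = g := by
            calc h = (g * g) * h := by rw [hg2, one_mul]
              _ = g * (g * h) := by rw [mul_assoc]
              _ = g := by rw [h1, mul_one]
          rcases hε with rfl | rfl <;> rcases hδ with rfl | rfl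
          · exact absurd (by rw [hh]) hne
          · rw [h1, Matrix.trace_one, Fintype.card_fin]; ring
          · rw [h1, Matrix.trace_one, Fintype.card_fin]; ring
          · exact absurd (by rw [hh]) hne
        · have hh : h = -g := by
            calc h = (g * g) * h := by rw [hg2, one_mul]
              _ = g * (g * h) := by rw [mul_assoc]
              _ = -g := by rw [h1, mul_neg_one]
          rcases hε with rfl | rfl <;> rcases hδ with rfl | rfl
          · rw [h1, Matrix.trace_neg, Matrix.trace_one, Fintype.card_fin]; ring
          · exact absurd (by rw [hh]; simp) hne
          · exact absurd (by rw [hh]; simp) hne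
          · rw [h1, Matrix.trace_neg, Matrix.trace_one, Fintype.card_fin]; ring
      simp only [dc2M]
      rw [htrp, htrpq, hkey]
      have heq : (n : ℂ) / 2 - 1/4 * ((n : ℂ) + -(n : ℂ)) = (((n : ℝ) / 2 : ℝ) : ℂ) := by
        push_cast; ring
      rw [heq, Complex.ofReal_re]
end

section
/- In the setting of the previous construction (G ≤ Uₙ(ℂ) with all elements other than ±I traceless), if 2|𝒮| > n(n+1)/2 then the configuration of 2|𝒮| half-dimensional isotypic subspaces attains the orthoplex bound: its minimal squared chordal distance equals m(n−m)/n = n/4. -/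
open scoped Matrix

lemma dc2M_formula {n : ℕ} (g h : Matrix (Fin n) (Fin n) ℂ) (ε δ : ℂ)
    (hg : g.trace = 0) (hh : h.trace = 0) :
    dc2M ((1/2:ℂ) • (1 + ε • g)) ((1/2:ℂ) • (1 + δ • h))
      = (n:ℝ)/4 - (ε * δ * (g*h).trace).re / 4 := by
  have e1 : ((1/2:ℂ) • (1 + ε • g)).trace - (((1/2:ℂ) • (1 + ε • g)) * ((1/2:ℂ) • (1 + δ • h))).trace
      = ((n:ℝ)/4 : ℂ) - (ε * δ * (g*h).trace) / 4 := by
    simp [Matrix.smul_mul, Matrix.mul_smul, mul_add, add_mul, Matrix.trace_add,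
      Matrix.trace_smul, hg, hh, Matrix.trace_one, smul_smul, Matrix.mul_one, Matrix.one_mul,
      smul_add]
    ring
  unfold dc2M
  rw [e1]
  simp [Complex.sub_re, Complex.div_re]

lemma half_dim_ge_two {n : ℕ} (g : Matrix (Fin n) (Fin n) ℂ) (hgg : g * g = 1) (hg1 : g ≠ 1)
    (htr : g.trace = 0) : 2 ≤ n := by
  by_contra hn
  push_neg at hn
  interval_cases n
  · exact hg1 (by ext i j; exact i.elim0)
  · have h00 : g 0 0 * g 0 0 = 1 := by
      have := congrFun (congrFun hgg 0) 0
      simpa [Matrix.mul_apply, Fin.sum_univ_one, Matrix.one_apply] using this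
    rw [Matrix.trace_fin_one] at htr
    rw [htr] at h00
    simp at h00


/-- in the setting of Statement 15, if `2|𝒮| > n(n+1)/2` then the
configuration of the `2|𝒮|` half-dimensional isotypic subspaces attains the orthoplex
bound: its minimal squared chordal distance equals `m(n−m)/n = n/4`. -/
theorem stmt16 {n : ℕ} (G : Subgroup (Matrix.unitaryGroup (Fin n) ℂ))
    (hfin : (G : Set (Matrix.unitaryGroup (Fin n) ℂ)).Finite)
    (htrace : ∀ u ∈ G, ((u : Matrix (Fin n) (Fin n) ℂ)).trace ≠ 0 →
      (u : Matrix (Fin n) (Fin n) ℂ) = 1 ∨ (u : Matrix (Fin n) (Fin n) ℂ) = -1) :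
    let A : Set (Matrix (Fin n) (Fin n) ℂ) :=
      {g | (∃ u ∈ G, (u : Matrix (Fin n) (Fin n) ℂ) = g) ∧ g * g = 1 ∧ g ≠ 1 ∧ g ≠ -1}
    let 𝒮 : Set (Set (Matrix (Fin n) (Fin n) ℂ)) :=
      {s | ∃ g ∈ A, s = {1, -1, g, -g}}
    let F : Set (Matrix (Fin n) (Fin n) ℂ) :=
      {p | ∃ g ∈ A, ∃ ε : ℂ, (ε = 1 ∨ ε = -1) ∧ p = (1 / 2 : ℂ) • (1 + ε • g)}
    2 * Nat.card 𝒮 > n * (n + 1) / 2 →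
      (∀ p ∈ F, ∀ q ∈ F, p ≠ q → (n : ℝ) / 4 ≤ dc2M p q) ∧
      (∃ p ∈ F, ∃ q ∈ F, p ≠ q ∧ dc2M p q = (n : ℝ) / 4) := by
  intro A 𝒮 F hcard
  -- trace of non-central elements of G vanishes
  have htr0 : ∀ g : Matrix (Fin n) (Fin n) ℂ, (∃ u ∈ G, (u : Matrix (Fin n) (Fin n) ℂ) = g) →
      g ≠ 1 → g ≠ -1 → g.trace = 0 := by
    rintro g ⟨u, hu, rfl⟩ h1 h2
    by_contra ht
    rcases htrace u hu ht with h | h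
    · exact h1 h
    · exact h2 h
  have hAtr : ∀ g ∈ A, Matrix.trace g = 0 := fun g hg => htr0 g hg.1 hg.2.2.1 hg.2.2.2
  have hmulG : ∀ g h : Matrix (Fin n) (Fin n) ℂ,
      (∃ u ∈ G, (u : Matrix (Fin n) (Fin n) ℂ) = g) →
      (∃ v ∈ G, (v : Matrix (Fin n) (Fin n) ℂ) = h) →
      (∃ w ∈ G, (w : Matrix (Fin n) (Fin n) ℂ) = g * h) := by
    rintro g h ⟨u, hu, rfl⟩ ⟨v, hv, rfl⟩
    exact ⟨u * v, mul_mem hu hv, rfl⟩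
  -- from gh = 1 deduce h = g, from gh = -1 deduce h = -g (using g*g = 1)
  have key1 : ∀ g h : Matrix (Fin n) (Fin n) ℂ, g * g = 1 → g * h = 1 → h = g := by
    intro g h hgg hgh
    calc h = (g * g) * h := by rw [hgg, one_mul]
    _ = g * (g * h) := by rw [mul_assoc]
    _ = g := by rw [hgh, mul_one]
  have key2 : ∀ g h : Matrix (Fin n) (Fin n) ℂ, g * g = 1 → g * h = -1 → h = -g := by
    intro g h hgg hgh
    calc h = (g * g) * h := by rw [hgg, one_mul]
    _ = g * (g * h) := by rw [mul_assoc]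
    _ = -g := by rw [hgh, mul_neg_one]
  constructor
  · -- lower bound
    rintro p ⟨g, hgA, ε, hε, rfl⟩ q ⟨h, hhA, δ, hδ, rfl⟩ hne
    obtain ⟨hgG, hgg, hg1, hgm1⟩ := hgA
    obtain ⟨hhG, hhh, hh1, hhm1⟩ := hhA
    rw [dc2M_formula g h ε δ (hAtr g ⟨hgG, hgg, hg1, hgm1⟩) (hAtr h ⟨hhG, hhh, hh1, hhm1⟩)]
    have hle : (ε * δ * (g * h).trace).re ≤ 0 := by
      by_cases ht : (g * h).trace = 0
      · simp [ht]
      · obtain ⟨w, hw, hwgh⟩ := hmulG g h hgG hhG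
        rcases htrace w hw (by rw [hwgh]; exact ht) with hgh | hgh
        · -- g * h = 1, so h = g
          have hhg := key1 g h hgg (by rw [← hwgh]; exact hgh)
          subst hhg
          rw [← hwgh, hgh, Matrix.trace_one]
          rcases hε with rfl | rfl <;> rcases hδ with rfl | rfl
          · exact absurd rfl hne
          · simp
          · simp
          · exact absurd rfl hne
        · -- g * h = -1, so h = -g
          have hhg := key2 g h hgg (by rw [← hwgh]; exact hgh)
          subst hhg
          rw [← hwgh, hgh]
          rcases hε with rfl | rfl <;> rcases hδ with rfl | rfl
          · simp [Matrix.trace_neg, Matrix.trace_one]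
          · exact absurd (by module) hne
          · exact absurd (by module) hne
          · simp [Matrix.trace_neg, Matrix.trace_one]
    linarith
  · -- existence of a pair achieving the bound
    have hpos : 0 < Nat.card 𝒮 := by by_contra h; omega
    obtain ⟨⟨s₀, hs₀⟩⟩ := (Nat.card_pos_iff.mp hpos).1
    obtain ⟨g₀, hg₀A, rfl⟩ := hs₀
    have hn2 : 2 ≤ n :=
      half_dim_ge_two g₀ hg₀A.2.1 hg₀A.2.2.1 (hAtr g₀ hg₀A)
    have hcard2 : 1 < Nat.card 𝒮 := by
      have : 3 ≤ n * (n + 1) / 2 := by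
        have : 2 * 3 ≤ n * (n + 1) := by nlinarith
        omega
      omega
    have hfin𝒮 : Finite 𝒮 := (Nat.card_pos_iff.mp hpos).2
    have hnt : (𝒮 : Set (Set (Matrix (Fin n) (Fin n) ℂ))).Nontrivial :=
      Set.nontrivial_coe_sort.mp (Finite.one_lt_card_iff_nontrivial.mp hcard2)
    obtain ⟨s₁, hs₁, s₂, hs₂, hsne⟩ := hnt
    obtain ⟨g, hgA, rfl⟩ := hs₁
    obtain ⟨h, hhA, rfl⟩ := hs₂
    have hne1 : h ≠ g := by rintro rfl; exact hsne rfl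
    have hne2 : h ≠ -g := by
      rintro rfl
      apply hsne
      ext x
      simp only [Set.mem_insert_iff, Set.mem_singleton_iff, neg_neg]
      tauto
    refine ⟨(1/2 : ℂ) • (1 + (1:ℂ) • g), ⟨g, hgA, 1, Or.inl rfl, rfl⟩,
      (1/2 : ℂ) • (1 + (1:ℂ) • h), ⟨h, hhA, 1, Or.inl rfl, rfl⟩, ?_, ?_⟩
    · intro heq
      have := smul_right_injective (Matrix (Fin n) (Fin n) ℂ) (by norm_num : (1/2:ℂ) ≠ 0) heq
      have := add_left_cancel this
      simp only [one_smul] at this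
      exact hne1 this.symm
    · rw [dc2M_formula g h 1 1 (hAtr g hgA) (hAtr h hhA)]
      have ht : (g * h).trace = 0 := by
        obtain ⟨w, hw, hwgh⟩ := hmulG g h hgA.1 hhA.1
        refine htr0 (g * h) ⟨w, hw, hwgh⟩ ?_ ?_
        · intro h1; exact hne1 (key1 g h hgA.2.1 h1)
        · intro h1; exact hne2 (key2 g h hgA.2.1 h1)
      simp [ht]
end
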